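/- Let P = C_1⋯C_ℓ be a path polyomino, K a field, R = K[y_1,…,y_ℓ], and let M_P ⊆ R be the monomial ideal generated by all products y_i y_j (1 ≤ i ≤ j ≤ ℓ, including i = j) such that the cells C_i and C_j lie in a common maximal cell interval of P. Then the socle soc(R/M_P) is concentrated in a single degree (i.e., all its nonzero homogeneous elements have the same degree) if and only if the rook complex ℛ_P is pure, i.e., every facet of ℛ_P has cardinality r(P). (Equivalently, R/in(J_P) is level if and only if ℛ_P is pure.) -/

import Mathlib

open MvPolynomial


/-- A cell of a polyomino, identified with its lower-left corner in `ℕ²`. -/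
abbrev Cell := ℕ × ℕ

/-- Two cells share an edge. -/
def cellAdj (c d : Cell) : Prop :=
  (c.1 = d.1 ∧ (c.2 + 1 = d.2 ∨ d.2 + 1 = c.2)) ∨
  (c.2 = d.2 ∧ (c.1 + 1 = d.1 ∨ d.1 + 1 = c.1))

/-- The four vertices of the unit square with lower-left corner `c`. -/
def cellVerts (c : Cell) : Finset (ℕ × ℕ) :=
  {c, (c.1 + 1, c.2), (c.1, c.2 + 1), (c.1 + 1, c.2 + 1)}

/-- The vertex set `V(P)` of a collection of cells. -/
def polyVerts (P : Finset Cell) : Finset (ℕ × ℕ) := P.biUnion cellVerts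

/-- Two cells are joined by a sequence of cells of `Q` in which consecutive cells
share an edge. -/
def connectedIn (Q : Set Cell) (c d : Cell) : Prop :=
  Relation.ReflTransGen (fun x y => x ∈ Q ∧ y ∈ Q ∧ cellAdj x y) c d

/-- A polyomino: a finite nonempty edge-connected set of cells. -/
def IsPolyomino (P : Finset Cell) : Prop :=
  P.Nonempty ∧ ∀ c ∈ P, ∀ d ∈ P, connectedIn (↑P) c d

/-- A polyomino is thin if it contains no 2×2 square tetromino. -/
def IsThin (P : Finset Cell) : Prop :=
  ¬ ∃ c : Cell, c ∈ P ∧ (c.1 + 1, c.2) ∈ P ∧ (c.1, c.2 + 1) ∈ P ∧ (c.1 + 1, c.2 + 1) ∈ P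

/-- A polyomino is simple if any two cells outside of it are connected by a path of
cells outside of it. -/
def IsSimplePoly (P : Finset Cell) : Prop :=
  IsPolyomino P ∧ ∀ c d : Cell, c ∉ P → d ∉ P → connectedIn {x : Cell | x ∉ P} c d

/-- Two (distinct) cells of `P` attack each other: they lie in a common row or column
of cells and all cells between them belong to `P`. -/
def Attacks (P : Finset Cell) (c d : Cell) : Prop :=
  c ≠ d ∧
  ((c.2 = d.2 ∧ ∀ t : ℕ, min c.1 d.1 ≤ t → t ≤ max c.1 d.1 → (t, c.2) ∈ P) ∨
   (c.1 = d.1 ∧ ∀ t : ℕ, min c.2 d.2 ≤ t → t ≤ max c.2 d.2 → (c.1, t) ∈ P))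

/-- `F` is a non-attacking set of cells (a configuration of non-attacking rooks) of `P`. -/
def NonAtt (P F : Finset Cell) : Prop :=
  F ⊆ P ∧ ∀ c ∈ F, ∀ d ∈ F, ¬ Attacks P c d

/-- A facet of the rook complex: a maximal non-attacking set of cells. -/
def IsFacet (P F : Finset Cell) : Prop :=
  NonAtt P F ∧ ∀ G : Finset Cell, NonAtt P G → F ⊆ G → G = F

/-- The rook number: the maximum cardinality of a non-attacking set of cells of `P`. -/
noncomputable def rookNumber (P : Finset Cell) : ℕ :=
  sSup {n : ℕ | ∃ F : Finset Cell, NonAtt P F ∧ F.card = n}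

/-- A maximal cell interval: a maximal set of pairwise attacking cells of `P`. -/
def IsMaxInterval (P I : Finset Cell) : Prop :=
  I.Nonempty ∧ I ⊆ P ∧ (∀ c ∈ I, ∀ d ∈ I, c ≠ d → Attacks P c d) ∧
  ∀ J : Finset Cell, J ⊆ P → (∀ c ∈ J, ∀ d ∈ J, c ≠ d → Attacks P c d) → I ⊆ J → J = I

/-- A cell of `P` is single if all cells of `P` attacking it lie, together with it,
in one common maximal cell interval. -/
def IsSingle (P : Finset Cell) (c : Cell) : Prop :=
  c ∈ P ∧ ∃ I : Finset Cell, IsMaxInterval P I ∧ c ∈ I ∧ ∀ d ∈ P, Attacks P c d → d ∈ I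

/-- `P` is a path polyomino with cells `C 1, …, C ℓ`. -/
def IsPathPoly (ℓ : ℕ) (C : ℕ → Cell) (P : Finset Cell) : Prop :=
  2 ≤ ℓ ∧
  P = (Finset.Icc 1 ℓ).image C ∧
  (∀ i ∈ Finset.Icc 1 ℓ, ∀ j ∈ Finset.Icc 1 ℓ, C i = C j → i = j) ∧
  (∀ i : ℕ, 1 ≤ i → i < ℓ → cellAdj (C i) (C (i + 1))) ∧
  (∀ i j : ℕ, 3 ≤ i → i + 2 ≤ ℓ → 1 ≤ j → j ≤ ℓ → (j + 2 < i ∨ i + 2 < j) →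
    Disjoint (cellVerts (C i)) (cellVerts (C j))) ∧
  IsThin P

/-- `I 1, …, I s` is the ordered sequence of the maximal cell intervals of a path
polyomino, consecutive ones intersecting. -/
def IsIntervalSeq (P : Finset Cell) (s : ℕ) (I : ℕ → Finset Cell) : Prop :=
  1 ≤ s ∧
  (∀ k ∈ Finset.Icc 1 s, IsMaxInterval P (I k)) ∧
  (∀ J : Finset Cell, IsMaxInterval P J → ∃ k ∈ Finset.Icc 1 s, J = I k) ∧
  (∀ k ∈ Finset.Icc 1 s, ∀ m ∈ Finset.Icc 1 s, I k = I m → k = m) ∧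
  (∀ k : ℕ, 1 ≤ k → k < s → ((I k) ∩ (I (k + 1))).Nonempty)

/-- The intervals `I (k+1), …, I (k+l)` form a stair of length `l` of a path polyomino
whose ordered maximal cell intervals are `I 1, …, I s`: all intermediate intervals have
length 2, and each extreme interval either has length `> 2` or is an end interval of
length 2. -/
def IsStairAt (s : ℕ) (I : ℕ → Finset Cell) (k l : ℕ) : Prop :=
  2 ≤ l ∧ k + l ≤ s ∧
  (∀ i : ℕ, k + 1 < i → i < k + l → (I i).card = 2) ∧
  (2 < (I (k + 1)).card ∨ (k = 0 ∧ (I (k + 1)).card = 2)) ∧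
  (2 < (I (k + l)).card ∨ (k + l = s ∧ (I (k + l)).card = 2))

/-- A bad stair is a stair of length 4, 6, or at least 8. -/
def HasBadStair (s : ℕ) (I : ℕ → Finset Cell) : Prop :=
  ∃ k l : ℕ, IsStairAt s I k l ∧ (l = 4 ∨ l = 6 ∨ 8 ≤ l)

variable (K : Type*) [Field K]

/-- The variables of the polynomial ring `R = K[y_1, …, y_ℓ]`. -/
abbrev RVar (ℓ : ℕ) := {i : ℕ // i ∈ Finset.Icc 1 ℓ}

/-- The squarefree monomial `y_F = ∏_{i ∈ T} y_i` associated to a set `T` of indices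
of cells. -/
noncomputable def yMon (ℓ : ℕ) (T : Finset ℕ) : MvPolynomial (RVar ℓ) K :=
  ∏ j ∈ Finset.univ.filter (fun j : RVar ℓ => (j : ℕ) ∈ T), X j

/-- The monomial ideal `M_P` generated by the products `y_i y_j` (`i = j` allowed) over
all pairs of cells `C_i, C_j` lying in a common maximal cell interval of `P`. -/
noncomputable def monIdeal (ℓ : ℕ) (C : ℕ → Cell) (P : Finset Cell) :
    Ideal (MvPolynomial (RVar ℓ) K) :=
  Ideal.span { f | ∃ i j : RVar ℓ,
    (∃ I : Finset Cell, IsMaxInterval P I ∧ C (i : ℕ) ∈ I ∧ C (j : ℕ) ∈ I) ∧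
    f = X i * X j }


namespace Statement9Aux

lemma attacks_symm {P : Finset Cell} {c d : Cell} (h : Attacks P c d) : Attacks P d c := by
  obtain ⟨hne, h | h⟩ := h
  · refine ⟨hne.symm, Or.inl ⟨h.1.symm, fun t h1 h2 => ?_⟩⟩
    have := h.2 t (by rwa [min_comm]) (by rwa [max_comm])
    rwa [h.1] at this
  · refine ⟨hne.symm, Or.inr ⟨h.1.symm, fun t h1 h2 => ?_⟩⟩
    have := h.2 t (by rwa [min_comm]) (by rwa [max_comm])
    rwa [h.1] at this

lemma exists_maxInterval_superset {P J : Finset Cell} (hJP : J ⊆ P) (hne : J.Nonempty)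
    (hatt : ∀ c ∈ J, ∀ d ∈ J, c ≠ d → Attacks P c d) :
    ∃ I, IsMaxInterval P I ∧ J ⊆ I := by
  classical
  set S := P.powerset.filter
    (fun J' => J ⊆ J' ∧ ∀ c ∈ J', ∀ d ∈ J', c ≠ d → Attacks P c d) with hS
  have hJS : J ∈ S := by
    simp only [hS, Finset.mem_filter, Finset.mem_powerset]
    exact ⟨hJP, Finset.Subset.refl J, hatt⟩
  obtain ⟨I, hIS, hImax⟩ := S.exists_max_image Finset.card ⟨J, hJS⟩
  simp only [hS, Finset.mem_filter, Finset.mem_powerset] at hIS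
  refine ⟨I, ⟨hne.mono hIS.2.1, hIS.1, hIS.2.2, fun K hKP hKatt hIK => ?_⟩, hIS.2.1⟩
  have hKS : K ∈ S := by
    simp only [hS, Finset.mem_filter, Finset.mem_powerset]
    exact ⟨hKP, hIS.2.1.trans hIK, hKatt⟩
  exact (Finset.eq_of_subset_of_card_le hIK (hImax K hKS)).symm

lemma exists_maxInterval_mem {P : Finset Cell} {c : Cell} (hc : c ∈ P) :
    ∃ I, IsMaxInterval P I ∧ c ∈ I := by
  have h := exists_maxInterval_superset (P := P) (J := {c}) (by simpa) ⟨c, by simp⟩ ?_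
  · obtain ⟨I, hI, hJI⟩ := h
    exact ⟨I, hI, hJI (by simp)⟩
  · intro x hx y hy hxy
    simp only [Finset.mem_singleton] at hx hy
    subst hx; subst hy; exact absurd rfl hxy

lemma attacks_iff_mem_interval {P : Finset Cell} {c d : Cell} (hc : c ∈ P) (hd : d ∈ P)
    (hne : c ≠ d) : Attacks P c d ↔ ∃ I, IsMaxInterval P I ∧ c ∈ I ∧ d ∈ I := by
  constructor
  · intro h
    have hsub : ({c, d} : Finset Cell) ⊆ P := by
      intro x hx
      simp only [Finset.mem_insert, Finset.mem_singleton] at hx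
      rcases hx with rfl | rfl
      · exact hc
      · exact hd
    have hpair : ∀ x ∈ ({c, d} : Finset Cell), ∀ y ∈ ({c, d} : Finset Cell),
        x ≠ y → Attacks P x y := by
      intro x hx y hy hxy
      simp only [Finset.mem_insert, Finset.mem_singleton] at hx hy
      rcases hx with rfl | rfl <;> rcases hy with rfl | rfl
      · exact absurd rfl hxy
      · exact h
      · exact attacks_symm h
      · exact absurd rfl hxy
    obtain ⟨I, hI, hJI⟩ := exists_maxInterval_superset hsub ⟨c, by simp⟩ hpair
    exact ⟨I, hI, hJI (by simp), hJI (by simp)⟩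
  · rintro ⟨I, hI, hcI, hdI⟩
    exact hI.2.2.1 c hcI d hdI hne

lemma exists_facet_card_rookNumber (P : Finset Cell) :
    ∃ F, IsFacet P F ∧ F.card = rookNumber P := by
  classical
  set S := P.powerset.filter (fun G => NonAtt P G) with hS
  have hmem : ∀ G, NonAtt P G → G ∈ S := by
    intro G hG
    simp only [hS, Finset.mem_filter, Finset.mem_powerset]
    exact ⟨hG.1, hG⟩
  have hES : (∅ : Finset Cell) ∈ S :=
    hmem ∅ ⟨Finset.empty_subset P, fun c hc => absurd hc (by simp)⟩
  obtain ⟨F, hFS, hFmax⟩ := S.exists_max_image Finset.card ⟨∅, hES⟩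
  have hFna : NonAtt P F := by
    have := Finset.mem_filter.mp hFS
    exact this.2
  have hfacet : IsFacet P F :=
    ⟨hFna, fun G hG hFG => (Finset.eq_of_subset_of_card_le hFG (hFmax G (hmem G hG))).symm⟩
  refine ⟨F, hfacet, ?_⟩
  have hbdd : BddAbove {n : ℕ | ∃ G, NonAtt P G ∧ G.card = n} := by
    refine ⟨P.card, fun n hn => ?_⟩
    obtain ⟨G, hG, rfl⟩ := hn
    exact Finset.card_le_card hG.1
  refine le_antisymm (le_csSup hbdd ⟨F, hFna, rfl⟩) (csSup_le ⟨F.card, F, hFna, rfl⟩ ?_)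
  rintro n ⟨G, hG, rfl⟩
  exact hFmax G (hmem G hG)

/-- `a` dominates a generator of the monomial ideal. -/
def GenLe (C : ℕ → Cell) (P : Finset Cell) {ℓ : ℕ} (a : RVar ℓ →₀ ℕ) : Prop :=
  ∃ i j : RVar ℓ, (∃ I : Finset Cell, IsMaxInterval P I ∧ C (i : ℕ) ∈ I ∧ C (j : ℕ) ∈ I) ∧
    Finsupp.single i 1 + Finsupp.single j 1 ≤ a

lemma X_mul_X_eq {σ : Type*} {R : Type*} [CommSemiring R] (i j : σ) :
    (X i * X j : MvPolynomial σ R) = monomial (Finsupp.single i 1 + Finsupp.single j 1) 1 := by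
  rw [← pow_one (X i), ← pow_one (X j), X_pow_eq_monomial, X_pow_eq_monomial,
    monomial_mul, one_mul]

lemma X_mul_monomial_eq {σ : Type*} {R : Type*} [CommSemiring R] (j : σ) (a : σ →₀ ℕ) (r : R) :
    (X j : MvPolynomial σ R) * monomial a r = monomial (Finsupp.single j 1 + a) r := by
  rw [← pow_one (X j), X_pow_eq_monomial, monomial_mul, one_mul]

lemma mem_monIdeal_iff (K : Type*) [Field K] {ℓ : ℕ} {C : ℕ → Cell} {P : Finset Cell}
    (f : MvPolynomial (RVar ℓ) K) :
    f ∈ monIdeal K ℓ C P ↔ ∀ a ∈ f.support, GenLe C P a := by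
  have hset : { f : MvPolynomial (RVar ℓ) K | ∃ i j : RVar ℓ,
      (∃ I : Finset Cell, IsMaxInterval P I ∧ C (i : ℕ) ∈ I ∧ C (j : ℕ) ∈ I) ∧ f = X i * X j }
      = (fun s => monomial s (1 : K)) ''
        {s : RVar ℓ →₀ ℕ | ∃ i j : RVar ℓ,
          (∃ I : Finset Cell, IsMaxInterval P I ∧ C (i : ℕ) ∈ I ∧ C (j : ℕ) ∈ I) ∧
          s = Finsupp.single i 1 + Finsupp.single j 1} := by
    ext x
    constructor
    · rintro ⟨i, j, hij, rfl⟩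
      exact ⟨_, ⟨i, j, hij, rfl⟩, (X_mul_X_eq i j).symm⟩
    · rintro ⟨s, ⟨i, j, hij, rfl⟩, rfl⟩
      exact ⟨i, j, hij, (X_mul_X_eq i j).symm⟩
  rw [monIdeal, hset, mem_ideal_span_monomial_image]
  constructor
  · intro h a ha
    obtain ⟨s, ⟨i, j, hij, rfl⟩, hle⟩ := h a ha
    exact ⟨i, j, hij, hle⟩
  · intro h a ha
    obtain ⟨i, j, hij, hle⟩ := h a ha
    exact ⟨_, ⟨i, j, hij, rfl⟩, hle⟩

section Corr

variable {ℓ : ℕ} {C : ℕ → Cell} {P : Finset Cell}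
  (hPimg : P = (Finset.Icc 1 ℓ).image C)
  (hCinj : ∀ i ∈ Finset.Icc 1 ℓ, ∀ j ∈ Finset.Icc 1 ℓ, C i = C j → i = j)

include hPimg in
lemma memP (i : RVar ℓ) : C (i : ℕ) ∈ P := by
  rw [hPimg]
  exact Finset.mem_image_of_mem C i.2

include hCinj in
lemma injRV {i j : RVar ℓ} (h : C (i : ℕ) = C (j : ℕ)) : i = j :=
  Subtype.ext (hCinj _ i.2 _ j.2 h)

include hPimg hCinj in
lemma soc_to_facet (a : RVar ℓ →₀ ℕ) (h1 : ¬ GenLe C P a)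
    (h2 : ∀ j : RVar ℓ, GenLe C P (Finsupp.single j 1 + a)) :
    ∃ F : Finset Cell, IsFacet P F ∧ F.card = a.degree := by
  classical
  have hsq : ∀ i : RVar ℓ, a i ≤ 1 := by
    intro i
    by_contra hgt
    push_neg at hgt
    obtain ⟨I, hI, hcI⟩ := exists_maxInterval_mem (memP hPimg i)
    apply h1
    refine ⟨i, i, ⟨I, hI, hcI, hcI⟩, ?_⟩
    rw [Finsupp.le_def]
    intro t
    rw [Finsupp.add_apply]
    rcases eq_or_ne i t with rfl | hit
    · rw [Finsupp.single_eq_same]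
      omega
    · rw [Finsupp.single_eq_of_ne' hit]
      omega
  set F := a.support.image (fun i : RVar ℓ => C (i : ℕ)) with hFdef
  have hcard : F.card = a.support.card :=
    Finset.card_image_of_injOn (fun i _ j _ h => injRV hCinj h)
  have hdeg : a.degree = a.support.card := by
    have hrfl : a.degree = ∑ i ∈ a.support, a i := rfl
    have hone : ∀ i ∈ a.support, a i = 1 := by
      intro i hi
      have h0 : a i ≠ 0 := Finsupp.mem_support_iff.mp hi
      have h1' := hsq i
      omega
    rw [hrfl, Finset.sum_congr rfl hone]
    simp
  have hFP : F ⊆ P := by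
    intro c hc
    obtain ⟨i, _, rfl⟩ := Finset.mem_image.mp hc
    exact memP hPimg i
  have hNA : NonAtt P F := by
    refine ⟨hFP, fun c hc d hd hatt => ?_⟩
    obtain ⟨i, hi, rfl⟩ := Finset.mem_image.mp hc
    obtain ⟨j, hj, rfl⟩ := Finset.mem_image.mp hd
    have hij : i ≠ j := fun h => hatt.1 (by rw [h])
    obtain ⟨I, hI, hIc, hId⟩ :=
      (attacks_iff_mem_interval (memP hPimg i) (memP hPimg j) hatt.1).mp hatt
    apply h1
    refine ⟨i, j, ⟨I, hI, hIc, hId⟩, ?_⟩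
    rw [Finsupp.le_def]
    intro t
    rw [Finsupp.add_apply]
    have h1t : 1 ≤ a i := Nat.one_le_iff_ne_zero.mpr (Finsupp.mem_support_iff.mp hi)
    have h2t : 1 ≤ a j := Nat.one_le_iff_ne_zero.mpr (Finsupp.mem_support_iff.mp hj)
    rcases eq_or_ne i t with hit | hit
    · rcases eq_or_ne j t with hjt | hjt
      · exact absurd (hit.trans hjt.symm) hij
      · rw [hit, Finsupp.single_eq_same, Finsupp.single_eq_of_ne' hjt, ← hit]
        omega
    · rw [Finsupp.single_eq_of_ne' hit]
      rcases eq_or_ne j t with hjt | hjt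
      · rw [hjt, Finsupp.single_eq_same, ← hjt]
        omega
      · rw [Finsupp.single_eq_of_ne' hjt]
        omega
  have hmax : ∀ G : Finset Cell, NonAtt P G → F ⊆ G → G = F := by
    intro G hG hFG
    refine Finset.Subset.antisymm ?_ hFG
    intro c hcG
    by_contra hcF
    have hcP : c ∈ P := hG.1 hcG
    rw [hPimg] at hcP
    obtain ⟨j0, hj0, rfl⟩ := Finset.mem_image.mp hcP
    obtain ⟨i, k, ⟨I, hI, hIi, hIk⟩, hle⟩ := h2 ⟨j0, hj0⟩
    rw [Finsupp.le_def] at hle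
    rcases eq_or_ne i ⟨j0, hj0⟩ with rfl | hij
    · rcases eq_or_ne k (⟨j0, hj0⟩ : RVar ℓ) with rfl | hkj
      · have h3 := hle ⟨j0, hj0⟩
        rw [Finsupp.add_apply, Finsupp.add_apply, Finsupp.single_eq_same] at h3
        exact hcF (Finset.mem_image.mpr
          ⟨⟨j0, hj0⟩, Finsupp.mem_support_iff.mpr (by omega), rfl⟩)
      · have h3 := hle k
        rw [Finsupp.add_apply, Finsupp.add_apply,
          Finsupp.single_eq_of_ne' (fun h => hkj h.symm : (⟨j0, hj0⟩ : RVar ℓ) ≠ k),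
          Finsupp.single_eq_same] at h3
        have hCkF : C (k : ℕ) ∈ F := Finset.mem_image.mpr
          ⟨k, Finsupp.mem_support_iff.mpr (by omega), rfl⟩
        have hne : C ((⟨j0, hj0⟩ : RVar ℓ) : ℕ) ≠ C (k : ℕ) :=
          fun h => hkj (injRV hCinj h.symm)
        have hatt : Attacks P (C ((⟨j0, hj0⟩ : RVar ℓ) : ℕ)) (C (k : ℕ)) :=
          hI.2.2.1 _ hIi _ hIk hne
        exact hG.2 _ hcG _ (hFG hCkF) hatt
    · rcases eq_or_ne k (⟨j0, hj0⟩ : RVar ℓ) with rfl | hkj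
      · have h3 := hle i
        rw [Finsupp.add_apply, Finsupp.add_apply,
          Finsupp.single_eq_of_ne' (fun h => hij h.symm : (⟨j0, hj0⟩ : RVar ℓ) ≠ i),
          Finsupp.single_eq_same] at h3
        have hCiF : C (i : ℕ) ∈ F := Finset.mem_image.mpr
          ⟨i, Finsupp.mem_support_iff.mpr (by omega), rfl⟩
        have hne : C (i : ℕ) ≠ C ((⟨j0, hj0⟩ : RVar ℓ) : ℕ) :=
          fun h => hij (injRV hCinj h)
        have hatt : Attacks P (C (i : ℕ)) (C ((⟨j0, hj0⟩ : RVar ℓ) : ℕ)) :=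
          hI.2.2.1 _ hIi _ hIk hne
        exact hG.2 _ (hFG hCiF) _ hcG hatt
      · apply h1
        refine ⟨i, k, ⟨I, hI, hIi, hIk⟩, ?_⟩
        rw [Finsupp.le_def]
        intro t
        have h3 := hle t
        rcases eq_or_ne t (⟨j0, hj0⟩ : RVar ℓ) with rfl | htj
        · rw [Finsupp.add_apply, Finsupp.single_eq_of_ne' hij, Finsupp.single_eq_of_ne' hkj]
          omega
        · rw [Finsupp.add_apply, Finsupp.add_apply,
            Finsupp.single_eq_of_ne' (fun h => htj h.symm), zero_add] at h3
          rw [Finsupp.add_apply]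
          exact h3
  exact ⟨F, ⟨hNA, hmax⟩, hcard.trans hdeg.symm⟩

include hPimg hCinj in
lemma facet_to_soc (F : Finset Cell) (hF : IsFacet P F) :
    ∃ a : RVar ℓ →₀ ℕ, a.degree = F.card ∧ ¬ GenLe C P a ∧
      ∀ j : RVar ℓ, GenLe C P (Finsupp.single j 1 + a) := by
  classical
  set S : Finset (RVar ℓ) := Finset.univ.filter (fun i => C (i : ℕ) ∈ F) with hSdef
  set a : RVar ℓ →₀ ℕ := ∑ i ∈ S, Finsupp.single i 1 with hadef
  have haval : ∀ t, a t = if t ∈ S then 1 else 0 := by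
    intro t
    rw [hadef, Finsupp.finset_sum_apply]
    simp only [Finsupp.single_apply]
    exact Finset.sum_ite_eq' S t (fun _ => 1)
  have hsupp : a.support = S := by
    ext t
    rw [Finsupp.mem_support_iff, haval]
    split_ifs with h <;> simp [h]
  have hdeg : a.degree = S.card := by
    have hrfl : a.degree = ∑ i ∈ a.support, a i := rfl
    rw [hrfl, hsupp, Finset.sum_congr rfl (fun t ht => by rw [haval, if_pos ht])]
    simp
  have hScard : S.card = F.card := by
    refine Finset.card_bij (fun i _ => C (i : ℕ)) ?_ ?_ ?_
    · intro i hi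
      exact (Finset.mem_filter.mp hi).2
    · intro i _ j _ h
      exact injRV hCinj h
    · intro c hc
      have hcP : c ∈ P := hF.1.1 hc
      rw [hPimg] at hcP
      obtain ⟨i0, hi0, rfl⟩ := Finset.mem_image.mp hcP
      exact ⟨⟨i0, hi0⟩, Finset.mem_filter.mpr ⟨Finset.mem_univ _, hc⟩, rfl⟩
  have key : ∀ i : RVar ℓ, i ∈ S → ∀ j : RVar ℓ,
      Finsupp.single i 1 + Finsupp.single j 1 ≤ Finsupp.single j 1 + a := by
    intro i hiS j
    rw [Finsupp.le_def]
    intro t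
    simp only [Finsupp.add_apply, Finsupp.single_apply, haval]
    rcases eq_or_ne i t with rfl | hit
    · rw [if_pos rfl, if_pos hiS]
      split_ifs <;> omega
    · rw [if_neg hit]
      split_ifs <;> omega
  refine ⟨a, hdeg.trans hScard, ?_, ?_⟩
  · rintro ⟨i, k, ⟨I, hI, hIi, hIk⟩, hle⟩
    rw [Finsupp.le_def] at hle
    have hiS : i ∈ S := by
      by_contra h
      have h1 := hle i
      rw [haval, if_neg h, Finsupp.add_apply, Finsupp.single_eq_same] at h1
      omega
    have hkS : k ∈ S := by
      by_contra h
      have h1 := hle k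
      rw [haval, if_neg h, Finsupp.add_apply, Finsupp.single_eq_same] at h1
      omega
    rcases eq_or_ne i k with rfl | hik
    · have h1 := hle i
      rw [haval, if_pos hiS, Finsupp.add_apply, Finsupp.single_eq_same] at h1
      omega
    · have hCiF : C (i : ℕ) ∈ F := (Finset.mem_filter.mp hiS).2
      have hCkF : C (k : ℕ) ∈ F := (Finset.mem_filter.mp hkS).2
      have hne : C (i : ℕ) ≠ C (k : ℕ) := fun h => hik (injRV hCinj h)
      exact hF.1.2 _ hCiF _ hCkF (hI.2.2.1 _ hIi _ hIk hne)
  · intro j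
    by_cases hjS : j ∈ S
    · obtain ⟨I, hI, hcI⟩ := exists_maxInterval_mem (memP hPimg j)
      exact ⟨j, j, ⟨I, hI, hcI, hcI⟩, key j hjS j⟩
    · have hCjF : C (j : ℕ) ∉ F := fun h => hjS (Finset.mem_filter.mpr ⟨Finset.mem_univ _, h⟩)
      have hsub : insert (C (j : ℕ)) F ⊆ P := Finset.insert_subset (memP hPimg j) hF.1.1
      have hx : ∃ c ∈ insert (C (j : ℕ)) F, ∃ d ∈ insert (C (j : ℕ)) F, Attacks P c d := by
        by_contra h
        push_neg at h
        have heq := hF.2 _ ⟨hsub, h⟩ (Finset.subset_insert _ _)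
        exact hCjF (heq ▸ Finset.mem_insert_self (C (j : ℕ)) F)
      obtain ⟨c, hc, d, hd, hatt⟩ := hx
      rcases Finset.mem_insert.mp hc with rfl | hcF
      · rcases Finset.mem_insert.mp hd with rfl | hdF
        · exact absurd rfl hatt.1
        · have hdP : d ∈ P := hF.1.1 hdF
          rw [hPimg] at hdP
          obtain ⟨i0, hi0, rfl⟩ := Finset.mem_image.mp hdP
          have hiS : (⟨i0, hi0⟩ : RVar ℓ) ∈ S :=
            Finset.mem_filter.mpr ⟨Finset.mem_univ _, hdF⟩
          obtain ⟨I, hI, hIj, hIi⟩ := (attacks_iff_mem_interval (memP hPimg j)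
            (memP hPimg ⟨i0, hi0⟩) hatt.1).mp hatt
          exact ⟨⟨i0, hi0⟩, j, ⟨I, hI, hIi, hIj⟩, key _ hiS j⟩
      · rcases Finset.mem_insert.mp hd with rfl | hdF
        · have hcP : c ∈ P := hF.1.1 hcF
          rw [hPimg] at hcP
          obtain ⟨i0, hi0, rfl⟩ := Finset.mem_image.mp hcP
          have hiS : (⟨i0, hi0⟩ : RVar ℓ) ∈ S :=
            Finset.mem_filter.mpr ⟨Finset.mem_univ _, hcF⟩
          obtain ⟨I, hI, hIi, hIj⟩ := (attacks_iff_mem_interval (memP hPimg ⟨i0, hi0⟩)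
            (memP hPimg j) hatt.1).mp hatt
          exact ⟨⟨i0, hi0⟩, j, ⟨I, hI, hIi, hIj⟩, key _ hiS j⟩
        · exact absurd hatt (hF.1.2 _ hcF _ hdF)

end Corr

end Statement9Aux

/-- For a path polyomino `P = C_1 ⋯ C_ℓ`, the socle of `R/M_P` is
concentrated in a single degree iff the rook complex of `P` is pure (every facet has
cardinality `r(P)`). -/
theorem statement9 (ℓ : ℕ) (C : ℕ → Cell) (P : Finset Cell) (hP : IsPathPoly ℓ C P) :
    (∀ (f g : MvPolynomial (RVar ℓ) K) (d e : ℕ),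
      f.IsHomogeneous d → g.IsHomogeneous e →
      f ∉ monIdeal K ℓ C P → g ∉ monIdeal K ℓ C P →
      (∀ j : RVar ℓ, X j * f ∈ monIdeal K ℓ C P) →
      (∀ j : RVar ℓ, X j * g ∈ monIdeal K ℓ C P) → d = e) ↔
    (∀ F : Finset Cell, IsFacet P F → F.card = rookNumber P) := by
  classical
  open Statement9Aux in
  obtain ⟨hl2, hPimg, hCinj, -, -, -⟩ := hP
  constructor
  · intro hsoc F hF
    obtain ⟨F0, hF0, hF0card⟩ := Statement9Aux.exists_facet_card_rookNumber P
    obtain ⟨a, hadeg, ha1, ha2⟩ := Statement9Aux.facet_to_soc hPimg hCinj F hF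
    obtain ⟨b, hbdeg, hb1, hb2⟩ := Statement9Aux.facet_to_soc hPimg hCinj F0 hF0
    have hsupa : (monomial a (1 : K)).support = {a} := by
      rw [MvPolynomial.support_monomial, if_neg one_ne_zero]
    have hsupb : (monomial b (1 : K)).support = {b} := by
      rw [MvPolynomial.support_monomial, if_neg one_ne_zero]
    have hda := hsoc (monomial a 1) (monomial b 1) F.card F0.card
      (isHomogeneous_monomial _ hadeg) (isHomogeneous_monomial _ hbdeg)
      (by
        rw [Statement9Aux.mem_monIdeal_iff]
        intro h
        exact ha1 (h a (by rw [hsupa]; exact Finset.mem_singleton_self a)))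
      (by
        rw [Statement9Aux.mem_monIdeal_iff]
        intro h
        exact hb1 (h b (by rw [hsupb]; exact Finset.mem_singleton_self b)))
      (by
        intro j
        rw [Statement9Aux.X_mul_monomial_eq, Statement9Aux.mem_monIdeal_iff]
        intro x hx
        rw [MvPolynomial.support_monomial, if_neg one_ne_zero, Finset.mem_singleton] at hx
        subst hx
        exact ha2 j)
      (by
        intro j
        rw [Statement9Aux.X_mul_monomial_eq, Statement9Aux.mem_monIdeal_iff]
        intro x hx
        rw [MvPolynomial.support_monomial, if_neg one_ne_zero, Finset.mem_singleton] at hx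
        subst hx
        exact hb2 j)
    rw [hda, hF0card]
  · intro hpure f g d e hf hg hfM hgM hfs hgs
    have main : ∀ (h : MvPolynomial (RVar ℓ) K) (n : ℕ), h.IsHomogeneous n →
        h ∉ monIdeal K ℓ C P → (∀ j : RVar ℓ, X j * h ∈ monIdeal K ℓ C P) →
        n = rookNumber P := by
      intro h n hh hM hs
      rw [Statement9Aux.mem_monIdeal_iff] at hM
      push_neg at hM
      obtain ⟨a, haSup, haGen⟩ := hM
      have ha2 : ∀ j : RVar ℓ, Statement9Aux.GenLe C P (Finsupp.single j 1 + a) := by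
        intro j
        have hmem := hs j
        rw [Statement9Aux.mem_monIdeal_iff] at hmem
        refine hmem _ ?_
        rw [MvPolynomial.mem_support_iff, MvPolynomial.coeff_X_mul]
        exact MvPolynomial.mem_support_iff.mp haSup
      obtain ⟨F, hF, hFcard⟩ := Statement9Aux.soc_to_facet hPimg hCinj a haGen ha2
      have hdn : a.degree = n := by
        have hw := hh (MvPolynomial.mem_support_iff.mp haSup)
        rw [Finsupp.degree_eq_weight_one]
        exact hw
      rw [← hpure F hF, hFcard, hdn]
    exact (main f d hf hfM hfs).trans (main g e hg hgM hgs).symm
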